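/- Let p ≥ 1, 1 ≤ i ≤ p, and let v, w₁, …, w_p ∈ ℂ satisfy v ≠ w_k for all k, and w_k ≠ w_i and w_k − w_i ≠ −1 for all k > i, as well as w_l − w_i ≠ −1 for i ≤ l ≤ p. Then [ ∏_{k≤p, k≠i} f^+(v, w_k) ] / (v − w_i) = Σ_{l=i}^{p} [ ∏_{k=1}^{l−1} f^+(v, w_k) ] · [ ∏_{k=l+1}^{p} f^+(w_k, w_i) ]^{−1} · 1/((w_l − w_i + 1)(v − w_l)). -/

import Mathlib

open scoped BigOperators Classical

noncomputable section

namespace TY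

/-- `f⁺(u,v) := (u - v + 1)/(u - v)`. -/
def fp (a b : ℂ) : ℂ := (a - b + 1) / (a - b)

lemma key (v a b : ℂ) (hva : v ≠ a) (hvb : v ≠ b) (hab : a ≠ b)
    (hab1 : a - b + 1 ≠ 0) :
    fp v a * (v - b)⁻¹
      = fp v b * (1 / ((a - b + 1) * (v - a))) + (fp a b)⁻¹ * (v - b)⁻¹ := by
  rw [fp, fp, fp, inv_div]
  have h1 : v - a ≠ 0 := sub_ne_zero.mpr hva
  have h2 : v - b ≠ 0 := sub_ne_zero.mpr hvb
  have h3 : a - b ≠ 0 := sub_ne_zero.mpr hab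
  field_simp
  ring

lemma aux (p : ℕ) (i : Fin p) (v : ℂ) (w : Fin p → ℂ)
    (h1 : ∀ k, v ≠ w k)
    (h2 : ∀ k, i < k → w k ≠ w i)
    (h3 : ∀ l, i ≤ l → w l - w i ≠ -1) :
    ∀ m : ℕ, ∀ j : Fin p, i ≤ j → (j : ℕ) + m + 1 = p →
    (∏ k ∈ Finset.univ.filter (fun k => k ≠ i), fp v (w k)) / (v - w i) =
      (∑ l ∈ Finset.univ.filter (fun l => j < l),
        (∏ k ∈ Finset.univ.filter (fun k => k < l), fp v (w k)) *
          (∏ k ∈ Finset.univ.filter (fun k => l < k), fp (w k) (w i))⁻¹ *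
          (1 / ((w l - w i + 1) * (v - w l))))
      + (∏ k ∈ Finset.univ.filter (fun k => k ≤ j ∧ k ≠ i), fp v (w k)) *
        (∏ k ∈ Finset.univ.filter (fun k => j < k), fp (w k) (w i))⁻¹ *
        (v - w i)⁻¹ := by
  intro m
  induction m with
  | zero =>
    intro j hij hjp
    have he : Finset.univ.filter (fun l : Fin p => j < l) = ∅ := by
      apply Finset.eq_empty_of_forall_notMem
      intro l hl
      simp only [Finset.mem_filter, Finset.mem_univ, true_and, Fin.lt_def] at hl
      have := l.isLt
      omega
    have hf : Finset.univ.filter (fun k : Fin p => k ≤ j ∧ k ≠ i)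
        = Finset.univ.filter (fun k => k ≠ i) := by
      apply Finset.filter_congr
      intro k _
      have := k.isLt
      simp only [Fin.le_def, iff_self_and, and_iff_right_iff_imp]
      intro _
      omega
    rw [he, hf]
    simp [div_eq_mul_inv]
  | succ m ih =>
    intro j hij hjp
    have hjlt : (j : ℕ) + 1 < p := by omega
    set j' : Fin p := ⟨(j : ℕ) + 1, hjlt⟩ with hj'
    have hijn : (i : ℕ) ≤ (j : ℕ) := hij
    have hij' : i ≤ j' := Fin.le_def.mpr (show (i : ℕ) ≤ (j : ℕ) + 1 by omega)
    have hiltj' : i < j' := Fin.lt_def.mpr (show (i : ℕ) < (j : ℕ) + 1 by omega)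
    have IH := ih j' hij' (by simp [hj']; omega)
    have hs1 : Finset.univ.filter (fun l : Fin p => j < l)
        = insert j' (Finset.univ.filter (fun l => j' < l)) := by
      ext l
      simp only [Finset.mem_filter, Finset.mem_univ, true_and, Finset.mem_insert,
        Fin.lt_def, Fin.ext_iff, hj']
      omega
    have hj'nm : j' ∉ Finset.univ.filter (fun l : Fin p => j' < l) := by simp
    have hs2 : Finset.univ.filter (fun k : Fin p => k < j')
        = insert i (Finset.univ.filter (fun k => k ≤ j ∧ k ≠ i)) := by
      ext k
      have hijn : (i : ℕ) ≤ (j : ℕ) := hij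
      simp only [Finset.mem_filter, Finset.mem_univ, true_and, Finset.mem_insert,
        Fin.lt_def, Fin.le_def, Fin.ext_iff, hj']
      omega
    have hinm : i ∉ Finset.univ.filter (fun k : Fin p => k ≤ j ∧ k ≠ i) := by simp
    have hs3 : Finset.univ.filter (fun k : Fin p => k ≤ j' ∧ k ≠ i)
        = insert j' (Finset.univ.filter (fun k => k ≤ j ∧ k ≠ i)) := by
      ext k
      have hijn : (i : ℕ) ≤ (j : ℕ) := hij
      simp only [Finset.mem_filter, Finset.mem_univ, true_and, Finset.mem_insert,
        Fin.le_def, Fin.ext_iff, hj']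
      omega
    have hj'nm2 : j' ∉ Finset.univ.filter (fun k : Fin p => k ≤ j ∧ k ≠ i) := by
      simp only [Finset.mem_filter, Finset.mem_univ, true_and, Fin.le_def, hj', not_and]
      intro h; omega
    rw [hs1, Finset.sum_insert hj'nm, Finset.prod_insert hj'nm,
      hs2, Finset.prod_insert hinm]
    rw [hs3, Finset.prod_insert hj'nm2] at IH
    rw [IH]
    set C := ∏ k ∈ Finset.univ.filter (fun k : Fin p => k ≤ j ∧ k ≠ i), fp v (w k)
    set E := ∏ k ∈ Finset.univ.filter (fun k : Fin p => j' < k), fp (w k) (w i)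
    have hK := key v (w j') (w i) (h1 j') (h1 i) (h2 j' hiltj')
      (by have := h3 j' hij'; intro h; apply this; linear_combination h)
    rw [mul_inv]
    linear_combination (C * E⁻¹) * hK

/-- for `1 ≤ i ≤ p`, `v ≠ w_k`, `w_k ≠ w_i` and `w_k − w_i ≠ −1` for `k > i`,
and `w_l − w_i ≠ −1` for `i ≤ l ≤ p`:
`[∏_{k≠i} f⁺(v,w_k)]/(v − w_i)
  = Σ_{l=i}^{p} [∏_{k<l} f⁺(v,w_k)]·[∏_{k>l} f⁺(w_k,w_i)]⁻¹·1/((w_l − w_i + 1)(v − w_l))`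
(indices realised 0-based). -/
theorem telescoping_fplus_identity (p : ℕ) (i : Fin p) (v : ℂ) (w : Fin p → ℂ)
    (h1 : ∀ k, v ≠ w k)
    (h2 : ∀ k, i < k → w k ≠ w i)
    (h3 : ∀ l, i ≤ l → w l - w i ≠ -1) :
    (∏ k ∈ Finset.univ.filter (fun k => k ≠ i), fp v (w k)) / (v - w i) =
      ∑ l ∈ Finset.univ.filter (fun l => i ≤ l),
        (∏ k ∈ Finset.univ.filter (fun k => k < l), fp v (w k)) *
          (∏ k ∈ Finset.univ.filter (fun k => l < k), fp (w k) (w i))⁻¹ *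
          (1 / ((w l - w i + 1) * (v - w l))) := by
  have hA := aux p i v w h1 h2 h3 (p - 1 - (i : ℕ)) i le_rfl
    (by have := i.isLt; omega)
  have hs : Finset.univ.filter (fun l : Fin p => i ≤ l)
      = insert i (Finset.univ.filter (fun l => i < l)) := by
    ext l
    simp only [Finset.mem_filter, Finset.mem_univ, true_and, Finset.mem_insert,
      Fin.lt_def, Fin.le_def, Fin.ext_iff]
    omega
  have hnm : i ∉ Finset.univ.filter (fun l : Fin p => i < l) := by simp
  have hf : Finset.univ.filter (fun k : Fin p => k ≤ i ∧ k ≠ i)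
      = Finset.univ.filter (fun k => k < i) := by
    ext k
    simp only [Finset.mem_filter, Finset.mem_univ, true_and, Fin.lt_def, Fin.le_def,
      Fin.ext_iff]
    omega
  rw [hs, Finset.sum_insert hnm, hA, hf]
  rw [sub_self, zero_add, one_mul, one_div]
  ring

end TY
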